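/- Let τ be a permutation of {1,...,n+m-3} of the form (j_1,...,j_{m-1}, i_1,...,i_{n-2}) where J = {j_1 < ... < j_{m-1}} and I = {i_1 < ... < i_{n-2}} partition {1,...,n+m-3}, and suppose the last n-t-2 indices i_{t+1},...,i_{n-2} equal t+m,...,n+m-3 and j_{m-1} = t+m-1. Then sgn(J,I)·(-1)^t = (-1)^{km}·sgn(σ), where k = t+m-1 and σ is the unshuffle in Sh(k-(m-1), m-2) obtained by restricting to the first k-1 permuted indices. -/

import Mathlib

/-- the sign computation in the proof of Lemma 3.7.  The permutation
`(J,I) = (j_1,…,j_{m-1}, i_1,…,i_{n-2})` of `{1,…,N}` (with the last `n-t-2` of the `i`'s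
equal to `t+m,…,N` and `j_{m-1} = t+m-1`) has, after discarding the common fixed tail,
the form `σ ∘ (rotation by t)` on the first `k = t+m-1` indices, where
`σ ∈ Sh(k-(m-1), m-2)` is the unshuffle `(i_1,…,i_t, j_1,…,j_{m-2})` fixing the last
index.  The claim is `sgn(J,I)·(-1)^t = (-1)^{km}·sgn(σ)`. -/
theorem kw_sign_computation
    (k m : ℕ) (hm : 1 ≤ m) (hk : 1 ≤ k) (hmk : m - 1 ≤ k)
    (t : ℕ) (ht : t = k - (m - 1))
    (σ : Equiv.Perm (Fin k))
    -- `σ` fixes the last index (corresponding to `j_{m-1} = t+m-1 = k`)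
    (hfix : σ ⟨k - 1, by omega⟩ = ⟨k - 1, by omega⟩)
    -- `σ` is an unshuffle in `Sh(k-(m-1), m-2) = Sh(t, m-2)`
    (hmono₁ : ∀ i j : Fin k, (i : ℕ) < (j : ℕ) → (j : ℕ) < t → σ i < σ j)
    (hmono₂ : ∀ i j : Fin k, t ≤ (i : ℕ) → (i : ℕ) < (j : ℕ) → (j : ℕ) < k - 1 →
      σ i < σ j) :
    Equiv.Perm.sign (σ * (finRotate k) ^ t) * (-1) ^ t
      = (-1) ^ (k * m) * Equiv.Perm.sign σ := by

  obtain ⟨k', rfl⟩ : ∃ k', k = k' + 1 := ⟨k - 1, by omega⟩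
  have htm : t + m = k' + 2 := by omega
  have key : ∀ a b : ℕ, a % 2 = b % 2 → ((-1 : ℤˣ)) ^ a = (-1) ^ b := by
    intro a b h
    rw [← Nat.div_add_mod a 2, ← Nat.div_add_mod b 2, pow_add, pow_add,
      pow_mul, pow_mul]
    norm_num [h]
  rw [map_mul, map_pow, sign_finRotate, ← pow_mul, mul_assoc, ← pow_add]
  rw [mul_comm]
  congr 1
  apply key
  rw [Nat.add_sub_cancel, show k' * t + t = (k' + 1) * t from by ring]
  rcases Nat.even_or_odd (k' + 1) with h | h
  · have h1 := h.mul_right t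
    have h2 := h.mul_right m
    rw [Nat.even_iff] at h1 h2
    omega
  · have ho : (k' + 1) % 2 = 1 := Nat.odd_iff.mp h
    rw [Nat.mul_mod, Nat.mul_mod (k' + 1) m, ho, one_mul, one_mul]
    omega
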